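/- There exist constants C > 0 and α > 0, depending only on n, with the following property. Let a be a (1,∞)-atom supported in a parabolic ball Q = B̃((t₀,x₀),r) contained in X = (0,∞) × ℝⁿ. Then for every integer j ≥ 2 and every (t,x) ∈ X with 2^j r ≤ d̃((t,x),(t₀,x₀)) < 2^{j+1} r, the integral Ta(t,x) = ∫_0^t ∫_{ℝⁿ} (∂_τ p_τ)|_{τ = t−s}(x−y) a(s,y) dy ds converges absolutely and satisfies |Ta(t,x)| ≤ C 2^{−jα} (2^j r)^{−(n+2)}. -/

import Mathlib

open MeasureTheory Metric Filter Set

noncomputable section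

/-- The Gauss–Weierstrass heat kernel `p_t(z) = (4πt)^{−n/2} exp(−|z|²/(4t))` on `ℝⁿ`. -/
def heatKernel (n : ℕ) (t : ℝ) (z : EuclideanSpace ℝ (Fin n)) : ℝ :=
  (4 * Real.pi * t) ^ (-(n : ℝ) / 2) * Real.exp (-‖z‖ ^ 2 / (4 * t))

/-- The parabolic quasi-distance on `N = ℝ × ℝⁿ`. -/
def pdist {n : ℕ} (p q : ℝ × EuclideanSpace ℝ (Fin n)) : ℝ :=
  max (Real.sqrt |p.1 - q.1|) (dist p.2 q.2)

/-- The open parabolic ball in `N = ℝ × ℝⁿ`. -/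
def pball {n : ℕ} (c : ℝ × EuclideanSpace ℝ (Fin n)) (r : ℝ) :
    Set (ℝ × EuclideanSpace ℝ (Fin n)) :=
  {p | pdist p c < r}

/-- The half-space `X = (0,∞) × ℝⁿ`. -/
def Xset (n : ℕ) : Set (ℝ × EuclideanSpace ℝ (Fin n)) := {p | 0 < p.1}

/-- A `(1,∞)`-atom supported in the parabolic ball `pball c r ⊆ X`. -/
def IsAtom1Inf (n : ℕ) (a : ℝ × EuclideanSpace ℝ (Fin n) → ℝ)
    (c : ℝ × EuclideanSpace ℝ (Fin n)) (r : ℝ) : Prop :=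
  0 < r ∧ Function.support a ⊆ pball c r ∧ pball c r ⊆ Xset n ∧
    Integrable a volume ∧ (∫ p, a p) = 0 ∧
    eLpNorm a ⊤ volume ≤ (volume (pball c r))⁻¹

/-! ### Auxiliary lemmas -/

lemma S17.sqrt_add_le {x y : ℝ} (hx : 0 ≤ x) (hy : 0 ≤ y) :
    Real.sqrt (x + y) ≤ Real.sqrt x + Real.sqrt y := by
  have h : x + y ≤ (Real.sqrt x + Real.sqrt y) ^ 2 := by
    nlinarith [Real.sq_sqrt hx, Real.sq_sqrt hy, Real.sqrt_nonneg x, Real.sqrt_nonneg y,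
      mul_nonneg (Real.sqrt_nonneg x) (Real.sqrt_nonneg y)]
  calc Real.sqrt (x + y) ≤ Real.sqrt ((Real.sqrt x + Real.sqrt y) ^ 2) := Real.sqrt_le_sqrt h
    _ = Real.sqrt x + Real.sqrt y := Real.sqrt_sq (by positivity)

lemma S17.pdist_triangle {n : ℕ} (p m q : ℝ × EuclideanSpace ℝ (Fin n)) :
    pdist p q ≤ pdist p m + pdist m q := by
  unfold pdist
  apply max_le
  · calc Real.sqrt |p.1 - q.1| ≤ Real.sqrt (|p.1 - m.1| + |m.1 - q.1|) :=
          Real.sqrt_le_sqrt (abs_sub_le _ _ _)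
      _ ≤ Real.sqrt |p.1 - m.1| + Real.sqrt |m.1 - q.1| :=
          S17.sqrt_add_le (abs_nonneg _) (abs_nonneg _)
      _ ≤ _ := add_le_add (le_max_left _ _) (le_max_left _ _)
  · calc dist p.2 q.2 ≤ dist p.2 m.2 + dist m.2 q.2 := dist_triangle _ _ _
      _ ≤ _ := add_le_add (le_max_right _ _) (le_max_right _ _)

lemma S17.pball_eq {n : ℕ} (c : ℝ × EuclideanSpace ℝ (Fin n)) {r : ℝ} (hr : 0 < r) :
    pball c r = (Set.Ioo (c.1 - r ^ 2) (c.1 + r ^ 2)) ×ˢ Metric.ball c.2 r := by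
  ext p
  simp only [pball, pdist, Set.mem_setOf_eq, Set.mem_prod, Set.mem_Ioo, Metric.mem_ball,
    max_lt_iff]
  constructor
  · rintro ⟨h1, h2⟩
    have := (Real.sqrt_lt' hr).1 h1
    have := abs_lt.1 this
    exact ⟨⟨by linarith [this.1, this.2], by linarith [this.1, this.2]⟩, h2⟩
  · rintro ⟨⟨h1, h2⟩, h3⟩
    refine ⟨(Real.sqrt_lt' hr).2 (abs_lt.2 ⟨by linarith, by linarith⟩), h3⟩

/-- monomial versus Gaussian -/
lemma S17.pow_le_exp (k : ℕ) {v : ℝ} (hv : 0 ≤ v) :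
    v ^ k ≤ ((8:ℝ) ^ k * (Nat.factorial k) + 1) * Real.exp (v ^ 2 / 8) := by
  have he : (1:ℝ) ≤ Real.exp (v ^ 2 / 8) := Real.one_le_exp (by positivity)
  have hfac : (0:ℝ) < (Nat.factorial k : ℝ) := by exact_mod_cast Nat.factorial_pos k
  rcases le_or_gt v 1 with h | h
  · have h1 : v ^ k ≤ 1 := pow_le_one₀ hv h
    have h2 : (1:ℝ) ≤ (8:ℝ) ^ k := one_le_pow₀ (by norm_num)
    have h8 : (1:ℝ) ≤ (8:ℝ) ^ k * (Nat.factorial k) + 1 := by nlinarith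
    nlinarith [mul_le_mul h8 he one_pos.le (by positivity : (0:ℝ) ≤ (8:ℝ) ^ k * (Nat.factorial k) + 1)]
  · have h1 : v ^ k ≤ v ^ (2 * k) := pow_le_pow_right₀ h.le (by omega)
    have h3 : (v ^ 2 / 8) ^ k / (Nat.factorial k) ≤ Real.exp (v ^ 2 / 8) := by
      refine le_trans ?_ (Real.sum_le_exp_of_nonneg (by positivity) (k + 1))
      exact Finset.single_le_sum (f := fun i => (v ^ 2 / 8) ^ i / (Nat.factorial i))
        (fun i _ => by positivity) (Finset.self_mem_range_succ k)
    have h4 : (v ^ 2 / 8) ^ k ≤ (Nat.factorial k) * Real.exp (v ^ 2 / 8) := by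
      rw [div_le_iff₀ hfac] at h3; linarith [h3]
    have h5 : v ^ (2 * k) = (8:ℝ) ^ k * (v ^ 2 / 8) ^ k := by
      rw [pow_mul, ← mul_pow]; ring_nf
    have h6 : (0:ℝ) < (8:ℝ) ^ k := by positivity
    calc v ^ k ≤ v ^ (2 * k) := h1
      _ = (8:ℝ) ^ k * (v ^ 2 / 8) ^ k := h5
      _ ≤ (8:ℝ) ^ k * ((Nat.factorial k) * Real.exp (v ^ 2 / 8)) := by
          exact mul_le_mul_of_nonneg_left h4 (by positivity)
      _ ≤ ((8:ℝ) ^ k * (Nat.factorial k) + 1) * Real.exp (v ^ 2 / 8) := by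
          nlinarith

/-- scalar core bound -/
lemma S17.core_scalar (m : ℕ) : ∃ C : ℝ, 0 < C ∧ ∀ v : ℝ, 0 ≤ v →
    (1 + v ^ 2) ^ 2 * (max 1 v) ^ m * Real.exp (-(v ^ 2) / 4) ≤ C := by
  refine ⟨(2:ℝ) ^ (m + 4) * ((8:ℝ) ^ (m + 4) * (Nat.factorial (m + 4)) + 2), by positivity, ?_⟩
  intro v hv
  have hmax : (0:ℝ) < max 1 v := lt_max_of_lt_left one_pos
  have h1 : (1 + v ^ 2) ^ 2 * (max 1 v) ^ m ≤ (1 + v) ^ (m + 4) := by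
    have e1 : 1 + v ^ 2 ≤ (1 + v) ^ 2 := by nlinarith
    have e2 : max 1 v ≤ 1 + v := max_le (by linarith) (by linarith)
    calc (1 + v ^ 2) ^ 2 * (max 1 v) ^ m ≤ ((1+v)^2) ^ 2 * (1 + v) ^ m := by
          refine mul_le_mul ?_ (pow_le_pow_left₀ hmax.le e2 m) (by positivity) (by positivity)
          exact pow_le_pow_left₀ (by positivity) e1 2
      _ = (1 + v) ^ (m + 4) := by ring
  have h2 : (1 + v) ^ (m + 4) ≤ (2:ℝ) ^ (m + 4) * (max 1 v) ^ (m + 4) := by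
    rw [← mul_pow]
    refine pow_le_pow_left₀ (by positivity) ?_ _
    rcases le_or_gt v 1 with h | h
    · simp [max_eq_left h]; linarith
    · rw [max_eq_right h.le]; linarith
  have h3 : (max 1 v) ^ (m + 4) ≤ ((8:ℝ) ^ (m+4) * (Nat.factorial (m+4)) + 1) * Real.exp (v ^ 2 / 8) + 1 := by
    rcases le_or_gt v 1 with h | h
    · rw [max_eq_left h, one_pow]
      have h9 : (0:ℝ) ≤ ((8:ℝ) ^ (m+4) * (Nat.factorial (m+4)) + 1) * Real.exp (v ^ 2 / 8) := by positivity
      linarith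
    · rw [max_eq_right h.le]
      linarith [S17.pow_le_exp (m + 4) (le_of_lt (lt_trans one_pos h))]
  have he1 : (1:ℝ) ≤ Real.exp (v ^ 2 / 8) := Real.one_le_exp (by positivity)
  have h4 : (max 1 v) ^ (m + 4) ≤ ((8:ℝ) ^ (m+4) * (Nat.factorial (m+4)) + 2) * Real.exp (v ^ 2 / 8) := by
    nlinarith [pow_pos (show (0:ℝ) < 8 by norm_num) (m+4)]
  have hexp : Real.exp (-(v ^ 2) / 4) * Real.exp (v ^ 2 / 8) = Real.exp (-(v^2)/8) := by
    rw [← Real.exp_add]; ring_nf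
  have hexp2 : Real.exp (-(v^2)/8) ≤ 1 := Real.exp_le_one_iff.2 (by nlinarith [sq_nonneg v])
  calc (1 + v ^ 2) ^ 2 * (max 1 v) ^ m * Real.exp (-(v ^ 2) / 4)
      ≤ (2:ℝ)^(m+4) * ((max 1 v) ^ (m+4)) * Real.exp (-(v ^ 2) / 4) := by
        refine mul_le_mul_of_nonneg_right (h1.trans h2) (Real.exp_nonneg _)
    _ ≤ (2:ℝ)^(m+4) * (((8:ℝ) ^ (m+4) * (Nat.factorial (m+4)) + 2) * Real.exp (v ^ 2 / 8)) * Real.exp (-(v ^ 2) / 4) := by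
        refine mul_le_mul_of_nonneg_right (mul_le_mul_of_nonneg_left h4 (by positivity)) (Real.exp_nonneg _)
    _ = (2:ℝ)^(m+4) * ((8:ℝ) ^ (m+4) * (Nat.factorial (m+4)) + 2) * (Real.exp (-(v ^ 2) / 4) * Real.exp (v ^ 2 / 8)) := by ring
    _ ≤ (2:ℝ)^(m+4) * ((8:ℝ) ^ (m+4) * (Nat.factorial (m+4)) + 2) * 1 := by
        rw [hexp]
        exact mul_le_mul_of_nonneg_left hexp2 (by positivity)
    _ = _ := by ring

/-- The Gaussian core bound -/
lemma S17.core (n : ℕ) : ∃ C : ℝ, 0 < C ∧ ∀ τ : ℝ, 0 < τ → ∀ w : ℝ, 0 ≤ w →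
    (4 * Real.pi * τ) ^ (-(n : ℝ) / 2) * Real.exp (-(w ^ 2) / (4 * τ)) * ((1 + w ^ 2 / τ) ^ 2 / τ ^ 2)
      ≤ C / (max (Real.sqrt τ) w) ^ (n + 4) := by
  obtain ⟨C₀, hC₀, h0⟩ := S17.core_scalar (n + 4)
  refine ⟨(4 * Real.pi) ^ (-(n : ℝ) / 2) * C₀, by positivity, ?_⟩
  intro τ hτ w hw
  set s := Real.sqrt τ with hs
  have hspos : 0 < s := Real.sqrt_pos.mpr hτ
  have hτs : τ = s ^ 2 := (Real.sq_sqrt hτ.le).symm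
  set v := w / s with hv
  have hvw : w = v * s := by rw [hv, div_mul_cancel₀ w hspos.ne']
  have hv0 : 0 ≤ v := div_nonneg hw hspos.le
  have hA : (4 * Real.pi * τ) ^ (-(n : ℝ) / 2) = (4 * Real.pi) ^ (-(n : ℝ) / 2) * (s ^ n)⁻¹ := by
    rw [Real.mul_rpow (by positivity) hτ.le]
    congr 1
    rw [hτs, ← Real.rpow_natCast s 2, ← Real.rpow_mul hspos.le, ← Real.rpow_natCast s n,
      ← Real.rpow_neg hspos.le]
    congr 1
    push_cast
    ring
  have hmax : max s w = s * max 1 v := by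
    rw [hvw, mul_max_of_nonneg _ _ hspos.le, mul_one, mul_comm]
  have hexp : -(w ^ 2) / (4 * τ) = -(v ^ 2) / 4 := by
    rw [hvw, hτs]; field_simp
  have huv : w ^ 2 / τ = v ^ 2 := by rw [hvw, hτs, mul_pow]; field_simp
  have hmaxpos : (0:ℝ) < max 1 v := lt_max_of_lt_left one_pos
  rw [hA, hexp, huv, hmax, hτs]
  have key := h0 v hv0
  have heq : (4 * Real.pi) ^ (-(n : ℝ) / 2) * (s ^ n)⁻¹ * Real.exp (-(v ^ 2) / 4) *
      ((1 + v ^ 2) ^ 2 / (s ^ 2) ^ 2)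
      = ((4 * Real.pi) ^ (-(n : ℝ) / 2) / ((s * max 1 v) ^ (n + 4))) *
        ((1 + v ^ 2) ^ 2 * (max 1 v) ^ (n + 4) * Real.exp (-(v ^ 2) / 4)) := by
    field_simp
    ring
  rw [heq]
  calc ((4 * Real.pi) ^ (-(n : ℝ) / 2) / ((s * max 1 v) ^ (n + 4))) *
        ((1 + v ^ 2) ^ 2 * (max 1 v) ^ (n + 4) * Real.exp (-(v ^ 2) / 4))
      ≤ ((4 * Real.pi) ^ (-(n : ℝ) / 2) / ((s * max 1 v) ^ (n + 4))) * C₀ := by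
        refine mul_le_mul_of_nonneg_left key (by positivity)
    _ = (4 * Real.pi) ^ (-(n : ℝ) / 2) * C₀ / (s * max 1 v) ^ (n + 4) := by ring

/-! ### Kernel derivative computations -/

def S17.Kf (n : ℕ) (τ q : ℝ) : ℝ :=
  (4 * Real.pi * τ) ^ (-(n : ℝ) / 2) * Real.exp (-q / (4 * τ)) *
    (-(n : ℝ) / (2 * τ) + q / (4 * τ ^ 2))

def S17.DtK (n : ℕ) (τ q : ℝ) : ℝ :=
  (4 * Real.pi * τ) ^ (-(n : ℝ) / 2) * Real.exp (-q / (4 * τ)) *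
    ((-(n : ℝ) / (2 * τ) + q / (4 * τ ^ 2)) ^ 2 + (n : ℝ) / (2 * τ ^ 2) - q / (2 * τ ^ 3))

def S17.DqK (n : ℕ) (τ q : ℝ) : ℝ :=
  (4 * Real.pi * τ) ^ (-(n : ℝ) / 2) * Real.exp (-q / (4 * τ)) *
    (-(1 / (4 * τ)) * (-(n : ℝ) / (2 * τ) + q / (4 * τ ^ 2)) + 1 / (4 * τ ^ 2))

lemma S17.hdA (n : ℕ) {τ : ℝ} (hτ : 0 < τ) :
    HasDerivAt (fun τ : ℝ => (4 * Real.pi * τ) ^ (-(n : ℝ) / 2))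
      ((4 * Real.pi) * (-(n : ℝ) / 2) * (4 * Real.pi * τ) ^ (-(n : ℝ) / 2 - 1)) τ := by
  have h4 : (0:ℝ) < 4 * Real.pi * τ := by positivity
  have hlin : HasDerivAt (fun τ : ℝ => 4 * Real.pi * τ) (4 * Real.pi) τ := by
    simpa using (hasDerivAt_id' τ).const_mul (4 * Real.pi)
  exact hlin.rpow_const (Or.inl h4.ne')

lemma S17.hdB (q : ℝ) {τ : ℝ} (hτ : 0 < τ) :
    HasDerivAt (fun τ : ℝ => Real.exp (-q / (4 * τ)))
      (Real.exp (-q / (4 * τ)) * (q / (4 * τ ^ 2))) τ := by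
  have hd : HasDerivAt (fun τ : ℝ => -q / (4 * τ)) (q / (4 * τ ^ 2)) τ := by
    have h1 : HasDerivAt (fun x : ℝ => 4 * x) (4:ℝ) τ := by
      simpa using (hasDerivAt_id' τ).const_mul (4:ℝ)
    have h2 := (hasDerivAt_const τ (-q)).div h1 (by positivity : (0:ℝ) < 4 * τ).ne'
    refine h2.congr_deriv ?_
    field_simp
    ring
  exact hd.exp

lemma S17.hdC (n : ℕ) (q : ℝ) {τ : ℝ} (hτ : 0 < τ) :
    HasDerivAt (fun τ : ℝ => -(n : ℝ) / (2 * τ) + q / (4 * τ ^ 2))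
      ((n : ℝ) / (2 * τ ^ 2) - q / (2 * τ ^ 3)) τ := by
  have h1 : HasDerivAt (fun x : ℝ => 2 * x) (2:ℝ) τ := by
    simpa using (hasDerivAt_id' τ).const_mul (2:ℝ)
  have h2 : HasDerivAt (fun x : ℝ => 4 * x ^ 2) (8 * τ) τ := by
    have := (hasDerivAt_pow 2 τ).const_mul (4:ℝ)
    refine this.congr_deriv ?_
    norm_num
    ring
  have ha : HasDerivAt (fun τ : ℝ => -(n : ℝ) / (2 * τ)) ((n : ℝ) / (2 * τ ^ 2)) τ := by
    have := (hasDerivAt_const τ (-(n:ℝ))).div h1 (by positivity : (0:ℝ) < 2 * τ).ne'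
    refine this.congr_deriv ?_
    field_simp
    ring
  have hb : HasDerivAt (fun τ : ℝ => q / (4 * τ ^ 2)) (-q * (8 * τ) / (4 * τ ^ 2) ^ 2) τ := by
    have := (hasDerivAt_const τ q).div h2 (by positivity : (0:ℝ) < 4 * τ ^ 2).ne'
    refine this.congr_deriv ?_
    ring
  have hsum := ha.add hb
  refine hsum.congr_deriv ?_
  field_simp
  ring

lemma S17.hasDerivAt_heatKernel (n : ℕ) (z : EuclideanSpace ℝ (Fin n)) {τ : ℝ} (hτ : 0 < τ) :
    HasDerivAt (fun τ => heatKernel n τ z) (S17.Kf n τ (‖z‖ ^ 2)) τ := by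
  have h4 : (0:ℝ) < 4 * Real.pi * τ := by positivity
  have hAB := (S17.hdA n hτ).mul (S17.hdB (‖z‖ ^ 2) hτ)
  have hfun : (fun τ => heatKernel n τ z)
      = fun τ : ℝ => (4 * Real.pi * τ) ^ (-(n : ℝ) / 2) * Real.exp (-(‖z‖ ^ 2) / (4 * τ)) := by
    funext τ
    simp only [heatKernel]
  rw [hfun]
  refine hAB.congr_deriv ?_
  rw [S17.Kf, Real.rpow_sub_one h4.ne']
  field_simp

lemma S17.hasDerivAt_Kf_tau (n : ℕ) (q : ℝ) {τ : ℝ} (hτ : 0 < τ) :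
    HasDerivAt (fun τ => S17.Kf n τ q) (S17.DtK n τ q) τ := by
  have h4 : (0:ℝ) < 4 * Real.pi * τ := by positivity
  have hABC := ((S17.hdA n hτ).mul (S17.hdB q hτ)).mul (S17.hdC n q hτ)
  have hfun : (fun τ => S17.Kf n τ q)
      = fun τ : ℝ => (4 * Real.pi * τ) ^ (-(n : ℝ) / 2) * Real.exp (-q / (4 * τ)) *
          (-(n : ℝ) / (2 * τ) + q / (4 * τ ^ 2)) := rfl
  rw [hfun]
  refine hABC.congr_deriv ?_
  rw [S17.DtK, Real.rpow_sub_one h4.ne']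
  simp only [Pi.mul_apply]
  field_simp
  ring

lemma S17.hasDerivAt_Kf_q (n : ℕ) {τ : ℝ} (hτ : 0 < τ) (q : ℝ) :
    HasDerivAt (fun q => S17.Kf n τ q) (S17.DqK n τ q) q := by
  have hB : HasDerivAt (fun q : ℝ => Real.exp (-q / (4 * τ)))
      (Real.exp (-q / (4 * τ)) * (-1 / (4 * τ))) q := by
    have hd : HasDerivAt (fun q : ℝ => -q / (4 * τ)) (-1 / (4 * τ)) q := by
      have := ((hasDerivAt_id' q).neg).div_const (4 * τ)
      exact this
    exact hd.exp
  have hAB : HasDerivAt (fun q : ℝ => (4 * Real.pi * τ) ^ (-(n : ℝ) / 2) * Real.exp (-q / (4 * τ)))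
      ((4 * Real.pi * τ) ^ (-(n : ℝ) / 2) * (Real.exp (-q / (4 * τ)) * (-1 / (4 * τ)))) q :=
    hB.const_mul _
  have hC : HasDerivAt (fun q : ℝ => -(n : ℝ) / (2 * τ) + q / (4 * τ ^ 2)) (1 / (4 * τ ^ 2)) q := by
    have := ((hasDerivAt_id' q).div_const (4 * τ ^ 2)).const_add (-(n : ℝ) / (2 * τ))
    convert this using 1
  have hABC := hAB.mul hC
  have hfun : (fun q => S17.Kf n τ q)
      = fun q : ℝ => ((4 * Real.pi * τ) ^ (-(n : ℝ) / 2) * Real.exp (-q / (4 * τ))) *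
          (-(n : ℝ) / (2 * τ) + q / (4 * τ ^ 2)) := rfl
  rw [hfun]
  refine hABC.congr_deriv ?_
  rw [S17.DqK]
  ring

/-! ### Kernel bounds -/

lemma S17.KB1 (n : ℕ) : ∃ C : ℝ, 0 < C ∧ ∀ τ : ℝ, 0 < τ → ∀ w : ℝ, 0 ≤ w →
    |S17.Kf n τ (w ^ 2)| ≤ C * τ / (max (Real.sqrt τ) w) ^ (n + 4) := by
  obtain ⟨C₀, hC₀, hcore⟩ := S17.core n
  refine ⟨((n:ℝ) + 1) * C₀, by positivity, ?_⟩
  intro τ hτ w hw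
  have hn0 : (0:ℝ) ≤ (n:ℝ) := Nat.cast_nonneg n
  set u : ℝ := w ^ 2 / τ with hudef
  have hu : 0 ≤ u := by positivity
  have hA : 0 < (4 * Real.pi * τ) ^ (-(n:ℝ)/2) := Real.rpow_pos_of_pos (by positivity) _
  have hE : 0 < Real.exp (-w ^ 2 / (4 * τ)) := Real.exp_pos _
  have heq : -(n:ℝ)/(2*τ) + w^2/(4*τ^2) = (-(n:ℝ)/2 + u/4) / τ := by
    rw [hudef]; field_simp
  have h2 : |(-(n:ℝ)/2 + u/4)| ≤ ((n:ℝ)+1) * (1+u)^2 := by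
    rw [abs_le]; constructor <;> nlinarith [sq_nonneg u]
  have hinner : |(-(n:ℝ)/(2*τ) + w^2/(4*τ^2))| ≤ (((n:ℝ)+1) * ((1+u)^2/τ^2)) * τ := by
    rw [heq, abs_div, abs_of_pos hτ]
    calc |(-(n:ℝ)/2 + u/4)| / τ ≤ (((n:ℝ)+1) * (1+u)^2) / τ := by gcongr
      _ = (((n:ℝ)+1) * ((1+u)^2/τ^2)) * τ := by field_simp
  have habs : |S17.Kf n τ (w^2)| = (4*Real.pi*τ)^(-(n:ℝ)/2) * Real.exp (-w^2/(4*τ)) *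
      |(-(n:ℝ)/(2*τ) + w^2/(4*τ^2))| := by
    rw [S17.Kf, abs_mul, abs_mul, abs_of_pos hA, abs_of_pos hE]
  rw [habs]
  calc (4*Real.pi*τ)^(-(n:ℝ)/2) * Real.exp (-w^2/(4*τ)) * |(-(n:ℝ)/(2*τ) + w^2/(4*τ^2))|
      ≤ (4*Real.pi*τ)^(-(n:ℝ)/2) * Real.exp (-w^2/(4*τ)) * ((((n:ℝ)+1) * ((1+u)^2/τ^2)) * τ) :=
        mul_le_mul_of_nonneg_left hinner (by positivity)
    _ = (((n:ℝ)+1)*τ) * ((4*Real.pi*τ)^(-(n:ℝ)/2) * Real.exp (-w^2/(4*τ)) * ((1+u)^2/τ^2)) := by ring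
    _ ≤ (((n:ℝ)+1)*τ) * (C₀ / (max (Real.sqrt τ) w)^(n+4)) := by
        refine mul_le_mul_of_nonneg_left (hcore τ hτ w hw) (by positivity)
    _ = ((n:ℝ)+1)*C₀ * τ / (max (Real.sqrt τ) w)^(n+4) := by ring

lemma S17.KB2 (n : ℕ) : ∃ C : ℝ, 0 < C ∧ ∀ τ : ℝ, 0 < τ → ∀ w : ℝ, 0 ≤ w →
    |S17.DtK n τ (w ^ 2)| ≤ C / (max (Real.sqrt τ) w) ^ (n + 4) := by
  obtain ⟨C₀, hC₀, hcore⟩ := S17.core n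
  refine ⟨(((n:ℝ) + 1)^2 + (n:ℝ) + 1) * C₀, by positivity, ?_⟩
  intro τ hτ w hw
  have hn0 : (0:ℝ) ≤ (n:ℝ) := Nat.cast_nonneg n
  set u : ℝ := w ^ 2 / τ with hudef
  have hu : 0 ≤ u := by positivity
  have hA : 0 < (4 * Real.pi * τ) ^ (-(n:ℝ)/2) := Real.rpow_pos_of_pos (by positivity) _
  have hE : 0 < Real.exp (-w ^ 2 / (4 * τ)) := Real.exp_pos _
  have heq : (-(n:ℝ)/(2*τ) + w^2/(4*τ^2))^2 + (n:ℝ)/(2*τ^2) - w^2/(2*τ^3)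
      = ((-(n:ℝ)/2 + u/4)^2 + (n:ℝ)/2 - u/2) / τ^2 := by
    rw [hudef]; field_simp
  have f1 : 0 ≤ ((n:ℝ)+1)*(1+u) - (-(n:ℝ)/2 + u/4) := by nlinarith
  have f2 : 0 ≤ ((n:ℝ)+1)*(1+u) + (-(n:ℝ)/2 + u/4) := by nlinarith
  have e1 : (-(n:ℝ)/2 + u/4)^2 ≤ ((n:ℝ)+1)^2*(1+u)^2 := by nlinarith [mul_nonneg f1 f2]
  have h2 : |(-(n:ℝ)/2 + u/4)^2 + (n:ℝ)/2 - u/2| ≤ (((n:ℝ)+1)^2 + (n:ℝ) + 1) * (1+u)^2 := by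
    rw [abs_le]; constructor <;> nlinarith [sq_nonneg (-(n:ℝ)/2 + u/4), sq_nonneg u]
  have hinner : |(-(n:ℝ)/(2*τ) + w^2/(4*τ^2))^2 + (n:ℝ)/(2*τ^2) - w^2/(2*τ^3)|
      ≤ (((n:ℝ)+1)^2 + (n:ℝ) + 1) * ((1+u)^2/τ^2) := by
    rw [heq, abs_div, abs_of_pos (by positivity : (0:ℝ) < τ^2)]
    calc |(-(n:ℝ)/2 + u/4)^2 + (n:ℝ)/2 - u/2| / τ^2
        ≤ ((((n:ℝ)+1)^2 + (n:ℝ) + 1) * (1+u)^2) / τ^2 := by gcongr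
      _ = (((n:ℝ)+1)^2 + (n:ℝ) + 1) * ((1+u)^2/τ^2) := by ring
  have habs : |S17.DtK n τ (w^2)| = (4*Real.pi*τ)^(-(n:ℝ)/2) * Real.exp (-w^2/(4*τ)) *
      |(-(n:ℝ)/(2*τ) + w^2/(4*τ^2))^2 + (n:ℝ)/(2*τ^2) - w^2/(2*τ^3)| := by
    rw [S17.DtK, abs_mul, abs_mul, abs_of_pos hA, abs_of_pos hE]
  rw [habs]
  calc (4*Real.pi*τ)^(-(n:ℝ)/2) * Real.exp (-w^2/(4*τ)) *
        |(-(n:ℝ)/(2*τ) + w^2/(4*τ^2))^2 + (n:ℝ)/(2*τ^2) - w^2/(2*τ^3)|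
      ≤ (4*Real.pi*τ)^(-(n:ℝ)/2) * Real.exp (-w^2/(4*τ)) *
          ((((n:ℝ)+1)^2 + (n:ℝ) + 1) * ((1+u)^2/τ^2)) :=
        mul_le_mul_of_nonneg_left hinner (by positivity)
    _ = (((n:ℝ)+1)^2 + (n:ℝ) + 1) * ((4*Real.pi*τ)^(-(n:ℝ)/2) * Real.exp (-w^2/(4*τ)) * ((1+u)^2/τ^2)) := by
        ring
    _ ≤ (((n:ℝ)+1)^2 + (n:ℝ) + 1) * (C₀ / (max (Real.sqrt τ) w)^(n+4)) :=
        mul_le_mul_of_nonneg_left (hcore τ hτ w hw) (by positivity)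
    _ = (((n:ℝ)+1)^2 + (n:ℝ) + 1) * C₀ / (max (Real.sqrt τ) w)^(n+4) := by ring

lemma S17.KB3 (n : ℕ) : ∃ C : ℝ, 0 < C ∧ ∀ τ : ℝ, 0 < τ → ∀ w : ℝ, 0 ≤ w →
    |S17.DqK n τ (w ^ 2)| ≤ C / (max (Real.sqrt τ) w) ^ (n + 4) := by
  obtain ⟨C₀, hC₀, hcore⟩ := S17.core n
  refine ⟨((n:ℝ) + 2) * C₀, by positivity, ?_⟩
  intro τ hτ w hw
  have hn0 : (0:ℝ) ≤ (n:ℝ) := Nat.cast_nonneg n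
  set u : ℝ := w ^ 2 / τ with hudef
  have hu : 0 ≤ u := by positivity
  have hA : 0 < (4 * Real.pi * τ) ^ (-(n:ℝ)/2) := Real.rpow_pos_of_pos (by positivity) _
  have hE : 0 < Real.exp (-w ^ 2 / (4 * τ)) := Real.exp_pos _
  have heq : -(1/(4*τ)) * (-(n:ℝ)/(2*τ) + w^2/(4*τ^2)) + 1/(4*τ^2)
      = ((-1/4) * (-(n:ℝ)/2 + u/4) + 1/4) / τ^2 := by
    rw [hudef]; field_simp
  have h2 : |(-1/4) * (-(n:ℝ)/2 + u/4) + 1/4| ≤ ((n:ℝ)+2) * (1+u)^2 := by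
    rw [abs_le]; constructor <;> nlinarith [sq_nonneg u]
  have hinner : |(-(1/(4*τ))) * (-(n:ℝ)/(2*τ) + w^2/(4*τ^2)) + 1/(4*τ^2)|
      ≤ ((n:ℝ)+2) * ((1+u)^2/τ^2) := by
    rw [heq, abs_div, abs_of_pos (by positivity : (0:ℝ) < τ^2)]
    calc |(-1/4) * (-(n:ℝ)/2 + u/4) + 1/4| / τ^2
        ≤ (((n:ℝ)+2) * (1+u)^2) / τ^2 := by gcongr
      _ = ((n:ℝ)+2) * ((1+u)^2/τ^2) := by ring
  have habs : |S17.DqK n τ (w^2)| = (4*Real.pi*τ)^(-(n:ℝ)/2) * Real.exp (-w^2/(4*τ)) *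
      |(-(1/(4*τ))) * (-(n:ℝ)/(2*τ) + w^2/(4*τ^2)) + 1/(4*τ^2)| := by
    rw [S17.DqK, abs_mul, abs_mul, abs_of_pos hA, abs_of_pos hE]
  rw [habs]
  calc (4*Real.pi*τ)^(-(n:ℝ)/2) * Real.exp (-w^2/(4*τ)) *
        |(-(1/(4*τ))) * (-(n:ℝ)/(2*τ) + w^2/(4*τ^2)) + 1/(4*τ^2)|
      ≤ (4*Real.pi*τ)^(-(n:ℝ)/2) * Real.exp (-w^2/(4*τ)) * (((n:ℝ)+2) * ((1+u)^2/τ^2)) :=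
        mul_le_mul_of_nonneg_left hinner (by positivity)
    _ = ((n:ℝ)+2) * ((4*Real.pi*τ)^(-(n:ℝ)/2) * Real.exp (-w^2/(4*τ)) * ((1+u)^2/τ^2)) := by ring
    _ ≤ ((n:ℝ)+2) * (C₀ / (max (Real.sqrt τ) w)^(n+4)) :=
        mul_le_mul_of_nonneg_left (hcore τ hτ w hw) (by positivity)
    _ = ((n:ℝ)+2) * C₀ / (max (Real.sqrt τ) w)^(n+4) := by ring

/-! ### MVT, volume and atom facts -/
open scoped ENNReal

lemma S17.mvt {f f' : ℝ → ℝ} {A B M : ℝ} (hAB : A ≤ B)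
    (hd : ∀ u ∈ Set.Icc A B, HasDerivAt f (f' u) u)
    (hM : ∀ u ∈ Set.Icc A B, |f' u| ≤ M) :
    |f B - f A| ≤ M * (B - A) := by
  have h := Convex.norm_image_sub_le_of_norm_hasDerivWithin_le
    (fun u hu => (hd u hu).hasDerivWithinAt)
    (fun u hu => by simpa [Real.norm_eq_abs] using hM u hu)
    (convex_Icc A B) (Set.left_mem_Icc.2 hAB) (Set.right_mem_Icc.2 hAB)
  simpa [Real.norm_eq_abs, abs_of_nonneg (sub_nonneg.2 hAB)] using h

lemma S17.volume_pball {n : ℕ} (c : ℝ × EuclideanSpace ℝ (Fin n)) {r : ℝ} (hr : 0 < r) :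
    0 < volume (pball c r) ∧ volume (pball c r) < ⊤ := by
  rw [S17.pball_eq c hr, MeasureTheory.Measure.volume_eq_prod, MeasureTheory.Measure.prod_prod]
  constructor
  · apply ENNReal.mul_pos
    · rw [Real.volume_Ioo]
      simp only [ne_eq, ENNReal.ofReal_eq_zero, not_le]
      nlinarith
    · exact (measure_ball_pos volume c.2 hr).ne'
  · exact ENNReal.mul_lt_top (by rw [Real.volume_Ioo]; exact ENNReal.ofReal_lt_top)
      measure_ball_lt_top

lemma S17.atom_l1 {n : ℕ} {a : ℝ × EuclideanSpace ℝ (Fin n) → ℝ}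
    {c : ℝ × EuclideanSpace ℝ (Fin n)} {r : ℝ}
    (h : IsAtom1Inf n a c r) : ∫ p, |a p| ≤ 1 := by
  obtain ⟨hr, hsupp, _, hint, _, hnorm⟩ := h
  have hQmeas : MeasurableSet (pball c r) := by
    rw [S17.pball_eq c hr]; exact measurableSet_Ioo.prod measurableSet_ball
  obtain ⟨hQpos, hQfin⟩ := S17.volume_pball c hr
  rw [eLpNorm_exponent_top] at hnorm
  have hae : ∀ᵐ p ∂(volume : Measure (ℝ × EuclideanSpace ℝ (Fin n))),
      (‖a p‖₊ : ℝ≥0∞) ≤ (volume (pball c r))⁻¹ :=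
    (ae_le_eLpNormEssSup (f := a) (μ := volume)).mono fun p hp => le_trans hp hnorm
  have hlin : ∫⁻ p, (‖a p‖₊ : ℝ≥0∞) ∂volume ≤ 1 := by
    calc ∫⁻ p, (‖a p‖₊ : ℝ≥0∞) ∂volume
        = ∫⁻ p, (pball c r).indicator (fun p => (‖a p‖₊ : ℝ≥0∞)) p ∂volume := by
          apply lintegral_congr
          intro p
          by_cases hp : p ∈ pball c r
          · simp [hp]
          · have ha0 : a p = 0 := by
              by_contra h0
              exact hp (hsupp (Function.mem_support.2 h0))
            simp [hp, ha0]
      _ = ∫⁻ p in pball c r, (‖a p‖₊ : ℝ≥0∞) ∂volume := lintegral_indicator hQmeas _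
      _ ≤ ∫⁻ _ in pball c r, (volume (pball c r))⁻¹ ∂volume :=
          lintegral_mono_ae (ae_restrict_of_ae hae)
      _ = (volume (pball c r))⁻¹ * volume (pball c r) := setLIntegral_const _ _
      _ = 1 := ENNReal.inv_mul_cancel hQpos.ne' hQfin.ne
  have heq : ∫ p, |a p| = (∫⁻ p, (‖a p‖₊ : ℝ≥0∞) ∂volume).toReal := by
    rw [show (fun p => |a p|) = fun p => ‖a p‖ from funext fun p => (Real.norm_eq_abs _).symm]
    exact integral_norm_eq_lintegral_enorm hint.aestronglyMeasurable
  rw [heq]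
  calc (∫⁻ p, (‖a p‖₊ : ℝ≥0∞) ∂volume).toReal ≤ (1 : ℝ≥0∞).toReal :=
        ENNReal.toReal_mono ENNReal.one_ne_top hlin
    _ = 1 := by simp

set_option maxHeartbeats 2000000 in
/-- there are `C, α > 0` depending only on `n` such that for every `(1,∞)`-atom
`a` supported in `Q = B̃((t₀,x₀),r) ⊆ X`, every `j ≥ 2` and every `(t,x) ∈ X` with
`2^j r ≤ d̃((t,x),(t₀,x₀)) < 2^{j+1} r`, the integral defining `Ta(t,x)` converges
absolutely and `|Ta(t,x)| ≤ C 2^{−jα} (2^j r)^{−(n+2)}`. -/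
theorem stmt17 (n : ℕ) (hn : 1 ≤ n) :
    ∃ C α : ℝ, 0 < C ∧ 0 < α ∧
      ∀ (a : ℝ × EuclideanSpace ℝ (Fin n) → ℝ)
        (c : ℝ × EuclideanSpace ℝ (Fin n)) (r : ℝ),
        IsAtom1Inf n a c r →
        ∀ j : ℕ, 2 ≤ j →
        ∀ (t : ℝ) (x : EuclideanSpace ℝ (Fin n)), (t, x) ∈ Xset n →
          (2 : ℝ) ^ j * r ≤ pdist (t, x) c → pdist (t, x) c < 2 ^ (j + 1) * r →
          IntegrableOn
            (fun q : ℝ × EuclideanSpace ℝ (Fin n) =>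
              deriv (fun τ => heatKernel n τ (x - q.2)) (t - q.1) * a q)
            (Set.Ioo (0 : ℝ) t ×ˢ (Set.univ : Set (EuclideanSpace ℝ (Fin n)))) volume ∧
          |∫ q in Set.Ioo (0 : ℝ) t ×ˢ (Set.univ : Set (EuclideanSpace ℝ (Fin n))),
              deriv (fun τ => heatKernel n τ (x - q.2)) (t - q.1) * a q| ≤
            C * (2 : ℝ) ^ (-(j : ℝ) * α) * ((2 : ℝ) ^ j * r) ^ (-((n : ℝ) + 2)) := by
  obtain ⟨C₁, hC₁, hKB1⟩ := S17.KB1 n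
  obtain ⟨C₂, hC₂, hKB2⟩ := S17.KB2 n
  obtain ⟨C₃, hC₃, hKB3⟩ := S17.KB3 n
  have hCsum : 0 < C₁ + C₂ + C₃ := by linarith
  refine ⟨2^(n+6) * (C₁ + C₂ + C₃) + 1, 1,
    add_pos (mul_pos (pow_pos two_pos _) hCsum) one_pos, one_pos, ?_⟩
  intro a c r hatom j hj t x hX hlow hupp
  have hL1 : ∫ p, |a p| ≤ 1 := S17.atom_l1 hatom
  obtain ⟨hr, hsupp, hsubX, hint, hzero, hnorm⟩ := hatom
  set CF : ℝ := 2^(n+6) * (C₁ + C₂ + C₃) + 1 with hCF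
  set D : ℝ := 2^j * r with hD
  have hDpos : 0 < D := by rw [hD]; positivity
  have hD2 : 0 < D/2 := half_pos hDpos
  have hDne : D ≠ 0 := hDpos.ne'
  have h2jne : ((2:ℝ)^j) ≠ 0 := by positivity
  have h2j : (4:ℝ) ≤ 2^j := by
    calc (4:ℝ) = 2^2 := by norm_num
      _ ≤ 2^j := pow_le_pow_right₀ one_le_two hj
  have h2j1 : (1:ℝ) ≤ 2^j := one_le_pow₀ one_le_two
  have hrD : 4*r ≤ D := by
    rw [hD]; exact mul_le_mul_of_nonneg_right h2j hr.le
  have ht : 0 < t := hX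
  have hr2 : (0:ℝ) < r^2 := by positivity
  have hpow4 : 0 < (2:ℝ)^(n+4)/D^(n+4) := div_pos (by positivity) (pow_pos hDpos _)
  have hpow3 : 0 < (2:ℝ)^(n+3)/D^(n+3) := div_pos (by positivity) (pow_pos hDpos _)
  have hpb : ∀ p : ℝ × EuclideanSpace ℝ (Fin n), p ∈ pball c r →
      c.1 - r^2 < p.1 ∧ p.1 < c.1 + r^2 ∧ dist p.2 c.2 < r := by
    intro p hp
    rw [S17.pball_eq c hr] at hp
    exact ⟨hp.1.1, hp.1.2, hp.2⟩
  set R := Set.Ioo (0:ℝ) t ×ˢ (Set.univ : Set (EuclideanSpace ℝ (Fin n))) with hR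
  have hRmeas : MeasurableSet R := measurableSet_Ioo.prod MeasurableSet.univ
  have hrho : ∀ u : ℝ, ∀ z : EuclideanSpace ℝ (Fin n), 0 ≤ t - u → pdist (u, z) c ≤ r →
      D/2 ≤ max (Real.sqrt (t - u)) ‖x - z‖ := by
    intro u z htu hpc
    have htri := S17.pdist_triangle (t, x) (u, z) c
    have h1 : pdist (t, x) (u, z) = max (Real.sqrt (t - u)) ‖x - z‖ := by
      show max (Real.sqrt |t - u|) (dist x z) = _
      rw [abs_of_nonneg htu, dist_eq_norm]
    rw [h1] at htri
    have h2 := le_trans hlow htri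
    linarith
  have hpowle : ∀ (m : ℕ) (ρ : ℝ), D/2 ≤ ρ → (1:ℝ)/ρ^m ≤ 2^m/D^m := by
    intro m ρ hρ
    have hρ0 : 0 < ρ := lt_of_lt_of_le hD2 hρ
    rw [div_le_div_iff₀ (pow_pos hρ0 m) (pow_pos hDpos m)]
    have hle : (D/2)^m ≤ ρ^m := pow_le_pow_left₀ hD2.le hρ m
    have he : (2:ℝ)^m * (D/2)^m = D^m := by
      rw [← mul_pow]; congr 1; ring
    calc (1:ℝ) * D^m = (2:ℝ)^m * (D/2)^m := by rw [he, one_mul]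
      _ ≤ 2^m * ρ^m := mul_le_mul_of_nonneg_left hle (by positivity)
  have hsupp' : ∀ q : ℝ × EuclideanSpace ℝ (Fin n), a q ≠ 0 → q ∈ pball c r :=
    fun q hq => hsupp (Function.mem_support.2 hq)
  have hbd : ∀ q : ℝ × EuclideanSpace ℝ (Fin n), q ∈ R → a q ≠ 0 →
      c.1 - r^2 < q.1 ∧ 0 < t - q.1 ∧ D/2 ≤ max (Real.sqrt (t - q.1)) ‖x - q.2‖ := by
    intro q hq ha0
    have hqb := hpb q (hsupp' q ha0)
    have hq1 : 0 < t - q.1 := sub_pos.2 ((Set.mem_prod.1 hq).1).2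
    refine ⟨hqb.1, hq1, ?_⟩
    apply hrho q.1 q.2 hq1.le
    exact le_of_lt (hsupp' q ha0)
  -- continuity and measurability
  have h1c : ContinuousOn (fun q : ℝ × EuclideanSpace ℝ (Fin n) => t - q.1) R :=
    (continuous_const.sub continuous_fst).continuousOn
  have hposR : ∀ q ∈ R, 0 < t - q.1 := fun q hq => sub_pos.2 ((Set.mem_prod.1 hq).1).2
  have h2c : ContinuousOn (fun q : ℝ × EuclideanSpace ℝ (Fin n) => ‖x - q.2‖^2) R :=
    ((continuous_const.sub continuous_snd).norm.pow 2).continuousOn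
  have hcont : ContinuousOn (fun q : ℝ × EuclideanSpace ℝ (Fin n) =>
      S17.Kf n (t - q.1) (‖x - q.2‖^2)) R := by
    simp only [S17.Kf]
    apply ContinuousOn.mul
    · apply ContinuousOn.mul
      · exact ContinuousOn.rpow_const (continuousOn_const.mul h1c)
          (fun q hq => Or.inl (mul_pos (by positivity) (hposR q hq)).ne')
      · exact Real.continuous_exp.comp_continuousOn
          ((h2c.neg).div (continuousOn_const.mul h1c)
            (fun q hq => (mul_pos four_pos (hposR q hq)).ne'))
    · apply ContinuousOn.add
      · exact continuousOn_const.div (continuousOn_const.mul h1c)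
          (fun q hq => (mul_pos two_pos (hposR q hq)).ne')
      · exact h2c.div (continuousOn_const.mul (h1c.pow 2))
          (fun q hq => (mul_pos four_pos (pow_pos (hposR q hq) 2)).ne')
  have hASM : AEStronglyMeasurable (fun q : ℝ × EuclideanSpace ℝ (Fin n) =>
      S17.Kf n (t - q.1) (‖x - q.2‖^2)) (volume.restrict R) :=
    hcont.aestronglyMeasurable hRmeas
  set g : ℝ × EuclideanSpace ℝ (Fin n) → ℝ :=
    fun q => S17.Kf n (t - q.1) (‖x - q.2‖^2) * a q with hg
  have hEqOn : Set.EqOn (fun q : ℝ × EuclideanSpace ℝ (Fin n) =>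
      deriv (fun τ => heatKernel n τ (x - q.2)) (t - q.1) * a q) g R := by
    intro q hq
    have hq1 : 0 < t - q.1 := hposR q hq
    have hder := (S17.hasDerivAt_heatKernel n (x - q.2) hq1).deriv
    simp only [hg, hder]
  -- integrability of g on R
  have hgb : ∀ q ∈ R, |g q| ≤ (C₁ * t * (2^(n+4)/D^(n+4))) * |a q| := by
    intro q hq
    by_cases ha0 : a q = 0
    · simp [hg, ha0]
    · obtain ⟨hq1, hq2, hq3⟩ := hbd q hq ha0
      have hK := hKB1 (t - q.1) hq2 ‖x - q.2‖ (norm_nonneg _)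
      have hρ0 : 0 < max (Real.sqrt (t - q.1)) ‖x - q.2‖ := lt_of_lt_of_le hD2 hq3
      have hq4 : t - q.1 ≤ t := by
        have h0 : 0 < q.1 := ((Set.mem_prod.1 hq).1).1
        linarith
      have hKle : |S17.Kf n (t - q.1) (‖x - q.2‖^2)| ≤ C₁ * t * (2^(n+4)/D^(n+4)) := by
        refine le_trans hK ?_
        have h5 := hpowle (n+4) _ hq3
        calc C₁ * (t - q.1) / (max (Real.sqrt (t - q.1)) ‖x - q.2‖)^(n+4)
            = (C₁ * (t - q.1)) * (1/(max (Real.sqrt (t - q.1)) ‖x - q.2‖)^(n+4)) := by ring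
          _ ≤ (C₁ * t) * (2^(n+4)/D^(n+4)) := by
              refine mul_le_mul (mul_le_mul_of_nonneg_left hq4 hC₁.le) h5
                (le_of_lt (div_pos one_pos (pow_pos hρ0 _)))
                (mul_nonneg hC₁.le ht.le)
          _ = C₁ * t * (2^(n+4)/D^(n+4)) := by ring
      simp only [hg, abs_mul]
      exact mul_le_mul_of_nonneg_right hKle (abs_nonneg _)
  have hgint : IntegrableOn g R volume := by
    show Integrable g (volume.restrict R)
    apply Integrable.mono' ((hint.abs.const_mul (C₁ * t * (2^(n+4)/D^(n+4)))).restrict)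
      (hASM.mul hint.aestronglyMeasurable.restrict)
    exact (ae_restrict_iff' hRmeas).2 (ae_of_all _ fun q hq => by
      rw [Real.norm_eq_abs]; exact hgb q hq)
  -- the key bound mechanism
  have hkey : ∀ (F : ℝ × EuclideanSpace ℝ (Fin n) → ℝ) (M : ℝ), 0 ≤ M →
      IntegrableOn F R volume → (∀ q ∈ R, |F q| ≤ M * |a q|) →
      |∫ q in R, F q| ≤ M := by
    intro F M hM hFi hFb
    have h1 : |∫ q in R, F q| ≤ ∫ q in R, |F q| := by
      simpa [Real.norm_eq_abs] using
        norm_integral_le_integral_norm (μ := volume.restrict R) F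
    have h2 : ∫ q in R, |F q| ≤ ∫ q in R, M * |a q| :=
      setIntegral_mono_on hFi.abs ((hint.abs.const_mul M).integrableOn) hRmeas hFb
    have h3 : ∫ q in R, M * |a q| = M * ∫ q in R, |a q| := integral_const_mul M _
    have h4 : ∫ q in R, |a q| ≤ ∫ q, |a q| :=
      setIntegral_le_integral hint.abs (ae_of_all _ fun q => abs_nonneg _)
    calc |∫ q in R, F q| ≤ M * ∫ q in R, |a q| := by rw [← h3]; exact h1.trans h2
      _ ≤ M * 1 := mul_le_mul_of_nonneg_left (h4.trans hL1) hM
      _ = M := mul_one M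
  -- RHS rewriting
  have hrw1 : (2:ℝ) ^ (-(j:ℝ) * 1) = ((2:ℝ)^j)⁻¹ := by
    rw [mul_one, Real.rpow_neg (by norm_num : (0:ℝ) ≤ 2), Real.rpow_natCast]
  have hrw2 : D ^ (-((n:ℝ) + 2)) = (D^(n+2))⁻¹ := by
    rw [show -((n:ℝ)+2) = -(((n+2 : ℕ)):ℝ) by push_cast; ring,
      Real.rpow_neg hDpos.le, Real.rpow_natCast]
  -- generic numeric bounds
  have hr2D : r^2 * 2^j ≤ D^2 := by
    have ha : (0:ℝ) ≤ r^2 * (2^j * (2^j - 1)) :=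
      mul_nonneg (sq_nonneg r) (mul_nonneg (by positivity) (by linarith))
    have he : D^2 = r^2 * (2^j * 2^j) := by rw [hD]; ring
    nlinarith [ha, he]
  have hgen2 : ∀ K : ℝ, 0 ≤ K →
      K * (2*r^2) * (2^(n+4)/D^(n+4)) ≤ (2^(n+5)*K) * ((2:ℝ)^j)⁻¹ * (D^(n+2))⁻¹ := by
    intro K hK
    have e1 : K * (2*r^2) * ((2:ℝ)^(n+4)/D^(n+4))
        = (2^(n+5)*K) * ((r^2*2^j) * (((2:ℝ)^j)⁻¹ * (D^(n+2))⁻¹ * (D^2)⁻¹)) := by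
      field_simp
      ring
    rw [e1]
    have hnn : (0:ℝ) ≤ ((2:ℝ)^j)⁻¹ * (D^(n+2))⁻¹ * (D^2)⁻¹ :=
      mul_nonneg (mul_nonneg (inv_nonneg.2 (by positivity))
        (inv_nonneg.2 (pow_nonneg hDpos.le _))) (inv_nonneg.2 (pow_nonneg hDpos.le _))
    calc (2^(n+5)*K) * ((r^2*2^j) * (((2:ℝ)^j)⁻¹ * (D^(n+2))⁻¹ * (D^2)⁻¹))
        ≤ (2^(n+5)*K) * ((D^2) * (((2:ℝ)^j)⁻¹ * (D^(n+2))⁻¹ * (D^2)⁻¹)) := by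
          refine mul_le_mul_of_nonneg_left (mul_le_mul_of_nonneg_right hr2D hnn) ?_
          exact mul_nonneg (by positivity) hK
      _ = (2^(n+5)*K) * ((2:ℝ)^j)⁻¹ * (D^(n+2))⁻¹ := by
          field_simp
  have hgen1 : ∀ K : ℝ, 0 ≤ K →
      2*K*r * (2^(n+3)/D^(n+3)) ≤ (2^(n+4)*K) * ((2:ℝ)^j)⁻¹ * (D^(n+2))⁻¹ := by
    intro K hK
    apply le_of_eq
    rw [hD]
    field_simp [hr.ne']
    ring
  rcases lt_or_ge t (c.1 + r^2) with hcase | hcase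
  -- CASE A : t < c.1 + r²
  · refine ⟨hgint.congr_fun hEqOn.symm hRmeas, ?_⟩
    rw [setIntegral_congr_fun hRmeas hEqOn]
    have hMA : ∀ q ∈ R, |g q| ≤ (C₁ * (2*r^2) * (2^(n+4)/D^(n+4))) * |a q| := by
      intro q hq
      by_cases ha0 : a q = 0
      · simp [hg, ha0]
      · obtain ⟨hq1, hq2, hq3⟩ := hbd q hq ha0
        have hK := hKB1 (t - q.1) hq2 ‖x - q.2‖ (norm_nonneg _)
        have hρ0 : 0 < max (Real.sqrt (t - q.1)) ‖x - q.2‖ := lt_of_lt_of_le hD2 hq3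
        have hτle : t - q.1 ≤ 2*r^2 := by linarith
        have hKle : |S17.Kf n (t - q.1) (‖x - q.2‖^2)| ≤ C₁ * (2*r^2) * (2^(n+4)/D^(n+4)) := by
          refine le_trans hK ?_
          have h5 := hpowle (n+4) _ hq3
          calc C₁ * (t - q.1) / (max (Real.sqrt (t - q.1)) ‖x - q.2‖)^(n+4)
              = (C₁ * (t - q.1)) * (1/(max (Real.sqrt (t - q.1)) ‖x - q.2‖)^(n+4)) := by ring
            _ ≤ (C₁ * (2*r^2)) * (2^(n+4)/D^(n+4)) := by
                refine mul_le_mul (mul_le_mul_of_nonneg_left hτle hC₁.le) h5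
                  (le_of_lt (div_pos one_pos (pow_pos hρ0 _)))
                  (mul_nonneg hC₁.le (by positivity))
            _ = C₁ * (2*r^2) * (2^(n+4)/D^(n+4)) := by ring
        simp only [hg, abs_mul]
        exact mul_le_mul_of_nonneg_right hKle (abs_nonneg _)
    have hMAnn : (0:ℝ) ≤ C₁ * (2*r^2) * (2^(n+4)/D^(n+4)) :=
      mul_nonneg (mul_nonneg hC₁.le (by positivity)) hpow4.le
    refine le_trans (hkey g _ hMAnn hgint hMA) ?_
    rw [hrw1, hrw2]
    calc C₁ * (2*r^2) * (2^(n+4)/D^(n+4))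
        ≤ (2^(n+5)*C₁) * ((2:ℝ)^j)⁻¹ * (D^(n+2))⁻¹ := hgen2 C₁ hC₁.le
      _ ≤ CF * ((2:ℝ)^j)⁻¹ * (D^(n+2))⁻¹ := by
          have hco : (2:ℝ)^(n+5)*C₁ ≤ CF := by
            rw [hCF, show (2:ℝ)^(n+6) = 2*2^(n+5) from by ring]
            nlinarith [mul_pos (pow_pos (show (0:ℝ)<2 by norm_num) (n+5)) hC₁,
              mul_pos (pow_pos (show (0:ℝ)<2 by norm_num) (n+5)) hC₂,
              mul_pos (pow_pos (show (0:ℝ)<2 by norm_num) (n+5)) hC₃]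
          refine mul_le_mul_of_nonneg_right (mul_le_mul_of_nonneg_right hco
            (inv_nonneg.2 (by positivity))) (inv_nonneg.2 (pow_nonneg hDpos.le _))
  -- CASE B : c.1 + r² ≤ t
  · set u₀ : ℝ := c.1 - r^2 with hu0
    have hτ₀ : 0 < t - u₀ := by rw [hu0]; nlinarith
    set κ : ℝ := S17.Kf n (t - u₀) (‖x - c.2‖^2) with hκ
    set F : ℝ × EuclideanSpace ℝ (Fin n) → ℝ :=
      fun q => (S17.Kf n (t - q.1) (‖x - q.2‖^2) - κ) * a q with hF
    clear_value u₀ κ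
    set MB : ℝ := C₂ * (2*r^2) * (2^(n+4)/D^(n+4)) + 2*C₃*r * (2^(n+3)/D^(n+3)) with hMB
    have hMBnn : 0 ≤ MB := by
      rw [hMB]
      exact add_nonneg (mul_nonneg (mul_nonneg hC₂.le (by positivity)) hpow4.le)
        (mul_nonneg (mul_nonneg (mul_nonneg (by norm_num) hC₃.le) hr.le) hpow3.le)
    have hdiff : ∀ p : ℝ × EuclideanSpace ℝ (Fin n), p ∈ pball c r →
        |S17.Kf n (t - p.1) (‖x - p.2‖^2) - κ| ≤ MB := by
      intro p hp
      obtain ⟨hp1, hp2, hp3⟩ := hpb p hp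
      have hp1' : u₀ ≤ p.1 := hp1.le
      have hpt : p.1 < t := lt_of_lt_of_le hp2 hcase
      -- time difference
      have hΔ1 : |S17.Kf n (t - p.1) (‖x - p.2‖^2) - S17.Kf n (t - u₀) (‖x - p.2‖^2)|
          ≤ C₂ * (2*r^2) * (2^(n+4)/D^(n+4)) := by
        have hmvt := S17.mvt (f := fun u => S17.Kf n (t - u) (‖x - p.2‖^2))
          (f' := fun u => S17.DtK n (t - u) (‖x - p.2‖^2) * (-1))
          (A := u₀) (B := p.1) (M := C₂ * (2^(n+4)/D^(n+4))) hp1'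
          (fun u hu => by
            have hut : 0 < t - u := by have := hu.2; linarith
            exact
              (S17.hasDerivAt_Kf_tau n (‖x - p.2‖^2) hut).comp u ((hasDerivAt_id' u).const_sub t))
          (fun u hu => by
            have hut : 0 < t - u := by have := hu.2; linarith
            have hpdc : pdist (u, p.2) c ≤ r := by
              show max (Real.sqrt |u - c.1|) (dist p.2 c.2) ≤ r
              apply max_le
              · calc Real.sqrt |u - c.1| ≤ Real.sqrt (r^2) := Real.sqrt_le_sqrt (by
                    rw [abs_le]
                    constructor
                    · have := hu.1; rw [hu0] at this; linarith
                    · have := hu.2; linarith)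
                  _ = r := Real.sqrt_sq hr.le
              · exact hp3.le
            have hρ := hrho u p.2 hut.le hpdc
            have hK := hKB2 (t - u) hut ‖x - p.2‖ (norm_nonneg _)
            have h5 := hpowle (n+4) _ hρ
            calc |S17.DtK n (t - u) (‖x - p.2‖^2) * (-1)|
                = |S17.DtK n (t - u) (‖x - p.2‖^2)| := by rw [abs_mul]; simp
              _ ≤ C₂ / (max (Real.sqrt (t - u)) ‖x - p.2‖)^(n+4) := hK
              _ = C₂ * (1/(max (Real.sqrt (t - u)) ‖x - p.2‖)^(n+4)) := by ring
              _ ≤ C₂ * (2^(n+4)/D^(n+4)) := mul_le_mul_of_nonneg_left h5 hC₂.le)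
        have hle : p.1 - u₀ ≤ 2*r^2 := by rw [hu0]; linarith
        refine le_trans hmvt ?_
        calc (C₂ * (2^(n+4)/D^(n+4))) * (p.1 - u₀)
            ≤ (C₂ * (2^(n+4)/D^(n+4))) * (2*r^2) :=
              mul_le_mul_of_nonneg_left hle (mul_nonneg hC₂.le hpow4.le)
          _ = C₂ * (2*r^2) * (2^(n+4)/D^(n+4)) := by ring
      -- space difference
      set v : EuclideanSpace ℝ (Fin n) := x - c.2 with hv
      set wv : EuclideanSpace ℝ (Fin n) := p.2 - c.2 with hwv
      clear_value v wv
      have hwvr : ‖wv‖ ≤ r := by rw [hwv, ← dist_eq_norm]; exact hp3.le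
      have hqf : ∀ θ : ℝ, HasDerivAt (fun θ : ℝ => ‖v - θ • wv‖^2)
          (2*θ*‖wv‖^2 - 2*(inner ℝ v wv : ℝ)) θ := by
        intro θ
        have hexp : (fun θ : ℝ => ‖v - θ • wv‖^2)
            = fun θ : ℝ => ‖v‖^2 - 2*(θ*(inner ℝ v wv : ℝ)) + θ^2*‖wv‖^2 := by
          funext θ'
          rw [norm_sub_sq_real, real_inner_smul_right, norm_smul]
          simp only [Real.norm_eq_abs, mul_pow, sq_abs]
          try ring
        rw [hexp]
        have h1 : HasDerivAt (fun θ : ℝ => θ*(inner ℝ v wv : ℝ)) ((inner ℝ v wv : ℝ)) θ := by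
          simpa using (hasDerivAt_id' θ).mul_const (inner ℝ v wv : ℝ)
        have h2 : HasDerivAt (fun θ : ℝ => θ^2*‖wv‖^2) (2*θ*‖wv‖^2) θ := by
          have h2' := (hasDerivAt_pow 2 θ).mul_const (‖wv‖^2)
          refine h2'.congr_deriv ?_
          push_cast
          ring
        have h3 : HasDerivAt (fun θ : ℝ => ‖v‖^2 - 2*(θ*(inner ℝ v wv : ℝ)))
            (-(2*(inner ℝ v wv : ℝ))) θ := (h1.const_mul 2).const_sub (‖v‖^2)
        have h4 := h3.add h2
        refine h4.congr_deriv ?_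
        ring
      have hΔ2 : |S17.Kf n (t - u₀) (‖x - p.2‖^2) - κ| ≤ 2*C₃*r * (2^(n+3)/D^(n+3)) := by
        have hmvt := S17.mvt (f := fun θ : ℝ => S17.Kf n (t - u₀) (‖v - θ • wv‖^2))
          (f' := fun θ : ℝ => S17.DqK n (t - u₀) (‖v - θ • wv‖^2)
            * (2*θ*‖wv‖^2 - 2*(inner ℝ v wv : ℝ)))
          (A := 0) (B := 1) (M := 2*C₃*r * (2^(n+3)/D^(n+3))) zero_le_one
          (fun θ _ => by
            exact
              (S17.hasDerivAt_Kf_q n hτ₀ (‖v - θ • wv‖^2)).comp θ (hqf θ))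
          (fun θ hθ => by
            have hxz : x - (c.2 + θ • wv) = v - θ • wv := by rw [hv]; abel
            have hpdc : pdist (u₀, c.2 + θ • wv) c ≤ r := by
              show max (Real.sqrt |u₀ - c.1|) (dist (c.2 + θ • wv) c.2) ≤ r
              apply max_le
              · have e : u₀ - c.1 = -(r^2) := by rw [hu0]; ring
                rw [e, abs_neg, abs_of_nonneg (sq_nonneg r), Real.sqrt_sq hr.le]
              · have e : dist (c.2 + θ • wv) c.2 = ‖θ • wv‖ := by
                  rw [dist_eq_norm]; congr 1; abel
                rw [e, norm_smul]
                have hθ1 : ‖θ‖ ≤ 1 := by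
                  rw [Real.norm_eq_abs, abs_of_nonneg hθ.1]; exact hθ.2
                calc ‖θ‖ * ‖wv‖ ≤ 1 * r :=
                      mul_le_mul hθ1 hwvr (norm_nonneg _) one_pos.le
                  _ = r := one_mul r
            have hρ := hrho u₀ (c.2 + θ • wv) hτ₀.le hpdc
            rw [hxz] at hρ
            have hρ0 : 0 < max (Real.sqrt (t - u₀)) ‖v - θ • wv‖ := lt_of_lt_of_le hD2 hρ
            have hK := hKB3 (t - u₀) hτ₀ ‖v - θ • wv‖ (norm_nonneg _)
            have hip : |2*θ*‖wv‖^2 - 2*(inner ℝ v wv : ℝ)| ≤ 2 * ‖v - θ • wv‖ * r := by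
              have he : 2*θ*‖wv‖^2 - 2*(inner ℝ v wv : ℝ)
                  = -(2 * (inner ℝ (v - θ • wv) wv : ℝ)) := by
                rw [inner_sub_left, real_inner_smul_left, real_inner_self_eq_norm_sq]
                ring
              rw [he, abs_neg]
              calc |2 * (inner ℝ (v - θ • wv) wv : ℝ)|
                  = 2 * |(inner ℝ (v - θ • wv) wv : ℝ)| := by rw [abs_mul]; norm_num
                _ ≤ 2 * (‖v - θ • wv‖ * ‖wv‖) :=
                    mul_le_mul_of_nonneg_left (abs_real_inner_le_norm _ _) (by norm_num)
                _ ≤ 2 * (‖v - θ • wv‖ * r) :=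
                    mul_le_mul_of_nonneg_left
                      (mul_le_mul_of_nonneg_left hwvr (norm_nonneg _)) (by norm_num)
                _ = 2 * ‖v - θ • wv‖ * r := by ring
            calc |S17.DqK n (t - u₀) (‖v - θ • wv‖^2) * (2*θ*‖wv‖^2 - 2*(inner ℝ v wv : ℝ))|
                = |S17.DqK n (t - u₀) (‖v - θ • wv‖^2)|
                    * |2*θ*‖wv‖^2 - 2*(inner ℝ v wv : ℝ)| := abs_mul _ _
              _ ≤ (C₃ / (max (Real.sqrt (t - u₀)) ‖v - θ • wv‖)^(n+4))
                    * (2 * ‖v - θ • wv‖ * r) :=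
                  mul_le_mul hK hip (abs_nonneg _)
                    (le_of_lt (div_pos hC₃ (pow_pos hρ0 _)))
              _ ≤ (C₃ / (max (Real.sqrt (t - u₀)) ‖v - θ • wv‖)^(n+4))
                    * (2 * (max (Real.sqrt (t - u₀)) ‖v - θ • wv‖) * r) := by
                  refine mul_le_mul_of_nonneg_left ?_
                    (le_of_lt (div_pos hC₃ (pow_pos hρ0 _)))
                  exact mul_le_mul_of_nonneg_right
                    (mul_le_mul_of_nonneg_left (le_max_right _ _) (by norm_num)) hr.le
              _ = 2*C₃*r * (1/(max (Real.sqrt (t - u₀)) ‖v - θ • wv‖)^(n+3)) := by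
                  rw [pow_succ]
                  field_simp
              _ ≤ 2*C₃*r * (2^(n+3)/D^(n+3)) := by
                  refine mul_le_mul_of_nonneg_left (hpowle (n+3) _ hρ) ?_
                  exact mul_nonneg (mul_nonneg (by norm_num) hC₃.le) hr.le)
        have h10 : ‖v - (1:ℝ) • wv‖^2 = ‖x - p.2‖^2 := by
          rw [one_smul, hv, hwv]; congr 2; abel
        have h00 : ‖v - (0:ℝ) • wv‖^2 = ‖v‖^2 := by
          rw [zero_smul, sub_zero]
        rw [show ((1:ℝ) - 0) = 1 from by norm_num, mul_one] at hmvt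
        simp only [h10, h00] at hmvt
        rw [hκ]
        exact hmvt
      calc |S17.Kf n (t - p.1) (‖x - p.2‖^2) - κ|
          ≤ |S17.Kf n (t - p.1) (‖x - p.2‖^2) - S17.Kf n (t - u₀) (‖x - p.2‖^2)|
            + |S17.Kf n (t - u₀) (‖x - p.2‖^2) - κ| := abs_sub_le _ _ _
        _ ≤ MB := by rw [hMB]; exact add_le_add hΔ1 hΔ2
    -- support inside R
    have hsuppR : ∀ q : ℝ × EuclideanSpace ℝ (Fin n), q ∉ R → a q = 0 := by
      intro q hq
      by_contra h0
      apply hq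
      have hqb := hpb q (hsupp' q h0)
      have hq0 : 0 < q.1 := hsubX (hsupp' q h0)
      exact Set.mem_prod.2 ⟨Set.mem_Ioo.2 ⟨hq0, lt_of_lt_of_le hqb.2.1 hcase⟩, Set.mem_univ _⟩
    -- integrability of F
    have hFb : ∀ q ∈ R, |F q| ≤ MB * |a q| := by
      intro q hq
      by_cases ha0 : a q = 0
      · simp [hF, ha0]
      · simp only [hF, abs_mul]
        exact mul_le_mul_of_nonneg_right (hdiff q (hsupp' q ha0)) (abs_nonneg _)
    have hFint : IntegrableOn F R volume := by
      show Integrable F (volume.restrict R)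
      apply Integrable.mono' ((hint.abs.const_mul MB).restrict)
        (((hcont.sub continuousOn_const).aestronglyMeasurable hRmeas).mul
          hint.aestronglyMeasurable.restrict)
      exact (ae_restrict_iff' hRmeas).2 (ae_of_all _ fun q hq => by
        rw [Real.norm_eq_abs]; exact hFb q hq)
    refine ⟨hgint.congr_fun hEqOn.symm hRmeas, ?_⟩
    rw [setIntegral_congr_fun hRmeas hEqOn]
    have hsplit : ∀ q : ℝ × EuclideanSpace ℝ (Fin n), g q = F q + κ * a q := by
      intro q
      simp only [hg, hF]
      ring
    have hRa : ∫ q in R, a q = 0 := by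
      rw [setIntegral_eq_integral_of_forall_compl_eq_zero (fun q hq => hsuppR q hq)]
      exact hzero
    have hsplitInt : ∫ q in R, g q = ∫ q in R, F q := by
      calc ∫ q in R, g q = ∫ q in R, (F q + κ * a q) :=
            setIntegral_congr_fun hRmeas (fun q _ => hsplit q)
        _ = (∫ q in R, F q) + ∫ q in R, κ * a q :=
            integral_add hFint ((hint.const_mul κ).restrict)
        _ = (∫ q in R, F q) + κ * ∫ q in R, a q := by rw [integral_const_mul]
        _ = ∫ q in R, F q := by rw [hRa, mul_zero, add_zero]
    rw [hsplitInt]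
    refine le_trans (hkey F MB hMBnn hFint hFb) ?_
    rw [hrw1, hrw2]
    have hb1 := hgen2 C₂ hC₂.le
    have hb2 := hgen1 C₃ hC₃.le
    have hcoef : (2:ℝ)^(n+5)*C₂ + 2^(n+4)*C₃ ≤ CF := by
      rw [hCF, show (2:ℝ)^(n+6) = 4*2^(n+4) from by ring,
        show (2:ℝ)^(n+5) = 2*2^(n+4) from by ring]
      nlinarith [mul_pos (pow_pos (show (0:ℝ)<2 by norm_num) (n+4)) hC₁,
        mul_pos (pow_pos (show (0:ℝ)<2 by norm_num) (n+4)) hC₂,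
        mul_pos (pow_pos (show (0:ℝ)<2 by norm_num) (n+4)) hC₃]
    rw [hMB]
    calc C₂ * (2*r^2) * (2^(n+4)/D^(n+4)) + 2*C₃*r * (2^(n+3)/D^(n+3))
        ≤ (2^(n+5)*C₂) * ((2:ℝ)^j)⁻¹ * (D^(n+2))⁻¹
          + (2^(n+4)*C₃) * ((2:ℝ)^j)⁻¹ * (D^(n+2))⁻¹ := add_le_add hb1 hb2
      _ = ((2:ℝ)^(n+5)*C₂ + 2^(n+4)*C₃) * ((2:ℝ)^j)⁻¹ * (D^(n+2))⁻¹ := by ring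
      _ ≤ CF * ((2:ℝ)^j)⁻¹ * (D^(n+2))⁻¹ := by
          refine mul_le_mul_of_nonneg_right (mul_le_mul_of_nonneg_right hcoef
            (inv_nonneg.2 (by positivity))) (inv_nonneg.2 (pow_nonneg hDpos.le _))
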